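/- Let F be a division ring and R = F[x;σ,δ]. Two non-constant skew polynomials f, g ∈ R of degrees m and n respectively have a common non-unit right factor in R if and only if there exist c, d ∈ R, not both zero, with cf + dg = 0, deg(c) < n, and deg(d) < m. -/

import Mathlib

variable {F R : Type*}

/-- Degree of a skew polynomial: the sup of the support of its coordinates
in the basis of powers of `X` (degree of `0` is `0` by convention). -/
noncomputable def deg [DivisionRing F] [Ring R] [Module F R]
    (b : Module.Basis ℕ F R) (f : R) : ℕ := (b.repr f).support.sup id

section Ore

variable [DivisionRing F] [Ring R] [Module F R]

/-- coefficient of a skew polynomial -/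
noncomputable def co (b : Module.Basis ℕ F R) (p : R) (k : ℕ) : F := b.repr p k

lemma co_add (b : Module.Basis ℕ F R) (p q : R) (k : ℕ) : co b (p + q) k = co b p k + co b q k := by
  simp [co]

lemma co_sub (b : Module.Basis ℕ F R) (p q : R) (k : ℕ) : co b (p - q) k = co b p k - co b q k := by
  simp [co]

lemma co_smul (b : Module.Basis ℕ F R) (a : F) (p : R) (k : ℕ) : co b (a • p) k = a * co b p k := by
  simp [co]

lemma co_zero (b : Module.Basis ℕ F R) (k : ℕ) : co b (0 : R) k = 0 := by simp [co]

lemma le_deg_of_co_ne_zero {b : Module.Basis ℕ F R} {p : R} {k : ℕ} (h : co b p k ≠ 0) :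
    k ≤ deg b p := by
  have : k ∈ (b.repr p).support := Finsupp.mem_support_iff.mpr h
  exact Finset.le_sup (f := id) this

lemma co_eq_zero_of_deg_lt {b : Module.Basis ℕ F R} {p : R} {k : ℕ} (h : deg b p < k) :
    co b p k = 0 := by
  by_contra hc
  exact absurd (le_deg_of_co_ne_zero hc) (not_le.mpr h)

lemma lead_ne_zero {b : Module.Basis ℕ F R} {p : R} (h : p ≠ 0) : co b p (deg b p) ≠ 0 := by
  have hne : ((b.repr p).support).Nonempty := by
    rw [Finsupp.support_nonempty_iff]
    simpa using h
  obtain ⟨j, hj, hje⟩ := Finset.exists_mem_eq_sup _ hne id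
  have : deg b p = j := hje
  rw [this]
  exact Finsupp.mem_support_iff.mp hj

lemma deg_lt_of_co {b : Module.Basis ℕ F R} {p : R} {k : ℕ} (hp : p ≠ 0)
    (H : ∀ s, k ≤ s → co b p s = 0) : deg b p < k := by
  by_contra hc
  exact lead_ne_zero hp (H _ (not_lt.mp hc))

lemma deg_zero (b : Module.Basis ℕ F R) : deg b (0 : R) = 0 := by simp [deg]

lemma ne_zero_of_deg_pos {b : Module.Basis ℕ F R} {p : R} (h : 0 < deg b p) : p ≠ 0 := by
  rintro rfl; rw [deg_zero] at h; exact lt_irrefl _ h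

/-- representation of `p` as a sum of monomials -/
lemma repr_sum (b : Module.Basis ℕ F R) (X : R) (hb : ∀ n : ℕ, b n = X ^ n) (p : R) :
    p = ∑ k ∈ (b.repr p).support, co b p k • X ^ k := by
  conv_lhs => rw [← b.linearCombination_repr p]
  rw [Finsupp.linearCombination_apply, Finsupp.sum]
  exact Finset.sum_congr rfl fun k _ => by rw [hb k]; rfl

lemma co_pow (b : Module.Basis ℕ F R) (X : R) (hb : ∀ n : ℕ, b n = X ^ n) (k s : ℕ) :
    co b (X ^ k) s = if s = k then 1 else 0 := by
  rw [← hb k, co, b.repr_self, Finsupp.single_apply, eq_comm]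
  simp [eq_comm]

lemma co_smul_pow (b : Module.Basis ℕ F R) (X : R) (hb : ∀ n : ℕ, b n = X ^ n) (u : F) (k s : ℕ) :
    co b (u • X ^ k) s = if s = k then u else 0 := by
  rw [co_smul, co_pow b X hb]
  split <;> simp

lemma co_sum (b : Module.Basis ℕ F R) {ι : Type*} (s : Finset ι) (f : ι → R) (t : ℕ) :
    co b (∑ j ∈ s, f j) t = ∑ j ∈ s, co b (f j) t := by
  classical
  induction s using Finset.induction with
  | empty => simp [co]
  | insert j s hj ih => rw [Finset.sum_insert hj, Finset.sum_insert hj, co_add, ih]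

section mul

variable (σ : F →+* F) (δ : F →+ F) (i : F →+* R) (X : R)
  (hsmul : ∀ (a : F) (r : R), a • r = i a * r)
  (b : Module.Basis ℕ F R) (hb : ∀ n : ℕ, b n = X ^ n)
  (hcomm : ∀ a : F, X * i a = i (σ a) * X + i (δ a))

include hsmul in
lemma smul_mul (a : F) (p q : R) : (a • p) * q = a • (p * q) := by
  rw [hsmul, hsmul, mul_assoc]

include hsmul hcomm in
lemma X_mul_smul_pow (u : F) (j : ℕ) :
    X * (u • X ^ j) = σ u • X ^ (j + 1) + δ u • X ^ j := by
  rw [hsmul, hsmul, hsmul, ← mul_assoc, hcomm, add_mul, mul_assoc, ← pow_succ']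

include hsmul hb hcomm in
lemma co_X_mul {p : R} {k : ℕ} (Hp : ∀ t, k < t → co b p t = 0) :
    (∀ t, k + 1 < t → co b (X * p) t = 0) ∧ co b (X * p) (k + 1) = σ (co b p k) := by
  have hrep : X * p = ∑ j ∈ (b.repr p).support,
      (σ (co b p j) • X ^ (j + 1) + δ (co b p j) • X ^ j) := by
    conv_lhs => rw [repr_sum b X hb p, Finset.mul_sum]
    exact Finset.sum_congr rfl fun j _ => X_mul_smul_pow σ δ i X hsmul hcomm _ _
  have hco : ∀ t, co b (X * p) t = ∑ j ∈ (b.repr p).support,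
      ((if t = j + 1 then σ (co b p j) else 0) + (if t = j then δ (co b p j) else 0)) := by
    intro t
    rw [hrep, co_sum]
    exact Finset.sum_congr rfl fun j _ => by
      rw [co_add, co_smul_pow b X hb, co_smul_pow b X hb]
  have hmem : ∀ j ∈ (b.repr p).support, j ≤ k := by
    intro j hj
    by_contra hc
    exact (Finsupp.mem_support_iff.mp hj) (Hp j (not_le.mp hc))
  constructor
  · intro t ht
    rw [hco t]
    refine Finset.sum_eq_zero fun j hj => ?_
    have hjk := hmem j hj
    rw [if_neg (by omega), if_neg (by omega), add_zero]
  · rw [hco (k + 1)]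
    have : ∀ j ∈ (b.repr p).support,
        ((if k + 1 = j + 1 then σ (co b p j) else 0) + (if k + 1 = j then δ (co b p j) else 0))
        = (if j = k then σ (co b p j) else 0) := by
      intro j hj
      have hjk := hmem j hj
      rw [if_neg (show ¬ (k + 1) = j by omega), add_zero]
      congr 1
      simp only [eq_iff_iff]
      omega
    rw [Finset.sum_congr rfl this, Finset.sum_ite_eq' _ k]
    split
    · rfl
    · next hk =>
      have h0 : co b p k = 0 := Finsupp.notMem_support_iff.mp hk
      rw [h0, map_zero]

include hsmul hb hcomm in
lemma co_pow_mul {p : R} {k : ℕ} (Hp : ∀ t, k < t → co b p t = 0) (e : ℕ) :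
    (∀ t, k + e < t → co b (X ^ e * p) t = 0) ∧
      co b (X ^ e * p) (k + e) = σ^[e] (co b p k) := by
  induction e with
  | zero => simpa using Hp
  | succ e ih =>
    have h2 := co_X_mul σ δ i X hsmul b hb hcomm ih.1
    rw [pow_succ', mul_assoc]
    constructor
    · intro t ht
      exact h2.1 t (by omega)
    · have : k + (e + 1) = k + e + 1 := by omega
      rw [this, h2.2, ih.2, Function.iterate_succ_apply']

include hsmul hb hcomm in
lemma co_mul {p q : R} {P Q : ℕ} (Hp : ∀ t, P < t → co b p t = 0)
    (Hq : ∀ t, Q < t → co b q t = 0) :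
    (∀ t, P + Q < t → co b (p * q) t = 0) ∧
      co b (p * q) (P + Q) = co b p P * σ^[P] (co b q Q) := by
  have hrep : p * q = ∑ j ∈ (b.repr p).support, co b p j • (X ^ j * q) := by
    conv_lhs => rw [repr_sum b X hb p, Finset.sum_mul]
    exact Finset.sum_congr rfl fun j _ => by
      rw [smul_mul i hsmul]
  have hco : ∀ t, co b (p * q) t = ∑ j ∈ (b.repr p).support,
      co b p j * co b (X ^ j * q) t := by
    intro t
    rw [hrep, co_sum]
    exact Finset.sum_congr rfl fun j _ => co_smul b _ _ _
  have hmem : ∀ j ∈ (b.repr p).support, j ≤ P := by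
    intro j hj
    by_contra hc
    exact (Finsupp.mem_support_iff.mp hj) (Hp j (not_le.mp hc))
  constructor
  · intro t ht
    rw [hco t]
    refine Finset.sum_eq_zero fun j hj => ?_
    rw [(co_pow_mul σ δ i X hsmul b hb hcomm Hq j).1 t (by have := hmem j hj; omega),
      mul_zero]
  · rw [hco (P + Q)]
    rw [Finset.sum_eq_single P]
    · rw [show P + Q = Q + P by omega, (co_pow_mul σ δ i X hsmul b hb hcomm Hq P).2]
    · intro j hj hne
      have hjP : j < P := lt_of_le_of_ne (hmem j hj) hne
      rw [(co_pow_mul σ δ i X hsmul b hb hcomm Hq j).1 (P + Q) (by omega), mul_zero]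
    · intro hP
      have h0 : co b p P = 0 := Finsupp.notMem_support_iff.mp hP
      rw [h0, zero_mul]

include hsmul hb hcomm in
lemma lead_mul {p q : R} (hp : p ≠ 0) (hq : q ≠ 0) :
    p * q ≠ 0 ∧ deg b (p * q) = deg b p + deg b q := by
  have Hp : ∀ t, deg b p < t → co b p t = 0 := fun t ht => co_eq_zero_of_deg_lt ht
  have Hq : ∀ t, deg b q < t → co b q t = 0 := fun t ht => co_eq_zero_of_deg_lt ht
  obtain ⟨h1, h2⟩ := co_mul σ δ i X hsmul b hb hcomm Hp Hq
  have hlead : co b (p * q) (deg b p + deg b q) ≠ 0 := by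
    rw [h2]
    have hσ : Function.Injective (⇑σ)^[deg b p] :=
      Function.Injective.iterate σ.injective _
    have : (⇑σ)^[deg b p] (co b q (deg b q)) ≠ 0 := by
      intro hc
      exact lead_ne_zero hq (hσ (by rw [hc, Function.iterate_fixed (map_zero σ)]))
    exact mul_ne_zero (lead_ne_zero hp) this
  have hne : p * q ≠ 0 := by
    intro hc
    rw [hc, co_zero] at hlead
    exact hlead rfl
  refine ⟨hne, le_antisymm ?_ (le_deg_of_co_ne_zero hlead)⟩
  by_contra hc
  exact lead_ne_zero hne (h1 _ (not_le.mp hc))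

include hsmul hb hcomm in
lemma deg_mul {p q : R} (hp : p ≠ 0) (hq : q ≠ 0) :
    deg b (p * q) = deg b p + deg b q := (lead_mul σ δ i X hsmul b hb hcomm hp hq).2

include hsmul hb hcomm in
lemma mul_ne_zero' {p q : R} (hp : p ≠ 0) (hq : q ≠ 0) : p * q ≠ 0 :=
  (lead_mul σ δ i X hsmul b hb hcomm hp hq).1

include hsmul hb hcomm in
/-- The division algorithm: right division by a nonzero element. -/
lemma div_algo (g : R) (hg : g ≠ 0) : ∀ f : R, ∃ q r : R,
    f = q * g + r ∧ (r = 0 ∨ deg b r < deg b g) := by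
  intro f
  generalize hN : deg b f = N
  induction N using Nat.strong_induction_on generalizing f with
  | _ N ih =>
  subst hN
  by_cases hf0 : f = 0
  · exact ⟨0, 0, by simp [hf0], Or.inl rfl⟩
  by_cases hdeg : deg b f < deg b g
  · exact ⟨0, f, by simp, Or.inr hdeg⟩
  push_neg at hdeg
  set u := co b f (deg b f) * ((⇑σ)^[deg b f - deg b g] (co b g (deg b g)))⁻¹ with hu
  set q₁ : R := u • X ^ (deg b f - deg b g) with hq₁
  have hXg := co_pow_mul σ δ i X hsmul b hb hcomm
    (fun t ht => co_eq_zero_of_deg_lt (p := g) ht) (deg b f - deg b g)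
  have hq₁g : ∀ t, co b (q₁ * g) t = u * co b (X ^ (deg b f - deg b g) * g) t := by
    intro t
    rw [hq₁, smul_mul i hsmul, co_smul]
  have hσg : (⇑σ)^[deg b f - deg b g] (co b g (deg b g)) ≠ 0 := by
    intro hc
    exact lead_ne_zero hg ((Function.Injective.iterate σ.injective _)
      (by rw [hc, Function.iterate_fixed (map_zero σ)]))
  have key := hXg.2
  rw [show deg b g + (deg b f - deg b g) = deg b f from by omega] at key
  have htop : co b (q₁ * g) (deg b f) = co b f (deg b f) := by
    rw [hq₁g, key, hu, mul_assoc, inv_mul_cancel₀ hσg, mul_one]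
  have hhigh : ∀ t, deg b f < t → co b (q₁ * g) t = 0 := by
    intro t ht
    rw [hq₁g, hXg.1 t (by omega), mul_zero]
  set f' := f - q₁ * g with hf'
  have hfeq : f = q₁ * g + f' := by rw [hf']; abel
  by_cases hf'0 : f' = 0
  · exact ⟨q₁, 0, by rw [hfeq, hf'0], Or.inl rfl⟩
  have hf'deg : deg b f' < deg b f := by
    refine deg_lt_of_co hf'0 fun s hs => ?_
    rw [hf', co_sub]
    rcases eq_or_lt_of_le hs with h | h
    · rw [← h, htop, sub_self]
    · rw [co_eq_zero_of_deg_lt (show deg b f < s from h), hhigh s h, sub_self]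
  obtain ⟨q₂, r, hq₂, hr⟩ := ih (deg b f') hf'deg f' rfl
  exact ⟨q₁ + q₂, r, by rw [hfeq, hq₂, add_mul]; abel, hr⟩

end mul

section linalg
open Module

variable (b : Module.Basis ℕ F R)

/-- span of monomials of degree `< k` -/
noncomputable def Vsp (k : ℕ) : Submodule F R :=
  Submodule.span F (Set.range fun j : Fin k => b j)

instance (k : ℕ) : FiniteDimensional F (Vsp b k) :=
  FiniteDimensional.span_of_finite F (Set.finite_range _)

lemma finrank_Vsp (k : ℕ) : Module.finrank F (Vsp b k) = k := by
  have h := finrank_span_eq_card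
    (b.linearIndependent.comp (Fin.val : Fin k → ℕ) Fin.val_injective)
  rw [Fintype.card_fin] at h
  exact h

lemma range_eq_image (k : ℕ) :
    (Set.range fun j : Fin k => b j) = ⇑b '' Set.Iio k := by
  ext x
  constructor
  · rintro ⟨j, rfl⟩
    exact ⟨j, j.isLt, rfl⟩
  · rintro ⟨m, hm, rfl⟩
    exact ⟨⟨m, hm⟩, rfl⟩

lemma mem_Vsp_iff {k : ℕ} {p : R} : p ∈ Vsp b k ↔ (p = 0 ∨ deg b p < k) := by
  rw [Vsp, range_eq_image, Basis.mem_span_image]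
  constructor
  · intro hsub
    by_cases hp : p = 0
    · exact Or.inl hp
    · refine Or.inr (hsub (Finsupp.mem_support_iff.mpr (lead_ne_zero hp)))
  · rintro (rfl | hdeg) j hj
    · simp at hj
    · have : (j : ℕ) ≤ deg b p := Finset.le_sup (f := id) hj
      exact Set.mem_Iio.mpr (lt_of_le_of_lt this hdeg)

end linalg

section maps

variable (σ : F →+* F) (δ : F →+ F) (i : F →+* R) (X : R)
  (hsmul : ∀ (a : F) (r : R), a • r = i a * r)
  (b : Module.Basis ℕ F R) (hb : ∀ n : ℕ, b n = X ^ n)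
  (hcomm : ∀ a : F, X * i a = i (σ a) * X + i (δ a))

/-- right multiplication as an `F`-linear map -/
noncomputable def mulRightL (hsmul : ∀ (a : F) (r : R), a • r = i a * r) (f : R) :
    R →ₗ[F] R where
  toFun p := p * f
  map_add' p q := add_mul p q f
  map_smul' a p := by simp only [RingHom.id_apply]; rw [smul_mul i hsmul]

include hsmul hb hcomm in
lemma pair_lands {p q : R} (hp : p ≠ 0) (hq : q ≠ 0) {K L M : ℕ}
    (hK : K + deg b p ≤ M) (hL : L + deg b q ≤ M)
    (x : Vsp b K × Vsp b L) :
    (x.1 : R) * p + (x.2 : R) * q ∈ Vsp b M := by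
  have mem1 : (x.1 : R) * p ∈ Vsp b M := by
    rcases (mem_Vsp_iff b).mp x.1.2 with h0 | hd
    · rw [h0, zero_mul]; exact Submodule.zero_mem _
    · rcases eq_or_ne (x.1 : R) 0 with h0 | hne
      · rw [h0, zero_mul]; exact Submodule.zero_mem _
      · refine (mem_Vsp_iff b).mpr (Or.inr ?_)
        rw [deg_mul σ δ i X hsmul b hb hcomm hne hp]
        omega
  have mem2 : (x.2 : R) * q ∈ Vsp b M := by
    rcases (mem_Vsp_iff b).mp x.2.2 with h0 | hd
    · rw [h0, zero_mul]; exact Submodule.zero_mem _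
    · rcases eq_or_ne (x.2 : R) 0 with h0 | hne
      · rw [h0, zero_mul]; exact Submodule.zero_mem _
      · refine (mem_Vsp_iff b).mpr (Or.inr ?_)
        rw [deg_mul σ δ i X hsmul b hb hcomm hne hq]
        omega
  exact Submodule.add_mem _ mem1 mem2

include hsmul hb hcomm in
lemma exists_pair {p q : R} (hp : p ≠ 0) (hq : q ≠ 0) :
    ∃ c d : R, ¬(c = 0 ∧ d = 0) ∧ c * p + d * q = 0 ∧
      deg b c ≤ deg b q ∧ deg b d ≤ deg b p := by
  set P := deg b p with hP
  set Q := deg b q with hQ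
  set Φ : (Vsp b (Q + 1) × Vsp b (P + 1)) →ₗ[F] Vsp b (P + Q + 1) :=
    LinearMap.codRestrict _
      (((mulRightL i hsmul p).comp (Vsp b (Q + 1)).subtype).coprod
        ((mulRightL i hsmul q).comp (Vsp b (P + 1)).subtype))
      (fun x => pair_lands σ δ i X hsmul b hb hcomm hp hq (by omega) (by omega) x) with hΦ
  have hnotinj : ¬ Function.Injective Φ := by
    intro hinj
    have hle := LinearMap.finrank_le_finrank_of_injective hinj
    rw [Module.finrank_prod, finrank_Vsp, finrank_Vsp, finrank_Vsp] at hle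
    omega
  rw [Function.not_injective_iff] at hnotinj
  obtain ⟨x, y, hxy, hne⟩ := hnotinj
  refine ⟨((x - y).1 : R), ((x - y).2 : R), ?_, ?_, ?_, ?_⟩
  · rintro ⟨h1, h2⟩
    apply hne
    have e1 : (x - y).1 = 0 := Subtype.ext h1
    have e2 : (x - y).2 = 0 := Subtype.ext h2
    have : x - y = 0 := Prod.ext e1 e2
    exact sub_eq_zero.mp this
  · have hval := congrArg (Subtype.val) hxy
    simp only [hΦ, LinearMap.codRestrict_apply, LinearMap.coprod_apply,
      LinearMap.comp_apply, Submodule.subtype_apply, mulRightL,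
      LinearMap.coe_mk, AddHom.coe_mk] at hval
    have e1 : ((x - y).1 : R) = (x.1 : R) - (y.1 : R) := rfl
    have e2 : ((x - y).2 : R) = (x.2 : R) - (y.2 : R) := rfl
    rw [e1, e2, sub_mul, sub_mul, sub_add_sub_comm, hval, sub_self]
  · rcases (mem_Vsp_iff b).mp (x - y).1.2 with h0 | hd
    · rw [h0, deg_zero]; exact Nat.zero_le _
    · omega
  · rcases (mem_Vsp_iff b).mp (x - y).2.2 with h0 | hd
    · rw [h0, deg_zero]; exact Nat.zero_le _
    · omega

end maps

end Ore

/-- `f, g` of degrees `m, n` have a common non-unit right factor iff there are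
`c, d`, not both zero, with `cf + dg = 0`, `deg c < n` and `deg d < m`. -/
theorem common_right_factor_iff [DivisionRing F] [Ring R] [Module F R]
    (σ : F →+* F) (δ : F →+ F)
    (hδ : ∀ a b : F, δ (a * b) = σ a * δ b + δ a * b)
    (i : F →+* R) (X : R)
    (hsmul : ∀ (a : F) (r : R), a • r = i a * r)
    (b : Module.Basis ℕ F R) (hb : ∀ n : ℕ, b n = X ^ n)
    (hcomm : ∀ a : F, X * i a = i (σ a) * X + i (δ a))
    (f g : R) (hf : 0 < deg b f) (hg : 0 < deg b g) :
    (∃ h : R, 0 < deg b h ∧ f ∈ Ideal.span {h} ∧ g ∈ Ideal.span {h}) ↔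
    (∃ c d : R, ¬(c = 0 ∧ d = 0) ∧ c * f + d * g = 0 ∧
      deg b c < deg b g ∧ deg b d < deg b f) := by
  classical
  have hfne : f ≠ 0 := ne_zero_of_deg_pos hf
  have hgne : g ≠ 0 := ne_zero_of_deg_pos hg
  constructor
  · rintro ⟨h, hh, hfh, hgh⟩
    have hhne : h ≠ 0 := ne_zero_of_deg_pos hh
    obtain ⟨a, ha⟩ := Submodule.mem_span_singleton.mp hfh
    obtain ⟨e, he⟩ := Submodule.mem_span_singleton.mp hgh
    rw [smul_eq_mul] at ha he
    have hane : a ≠ 0 := by rintro rfl; rw [zero_mul] at ha; exact hfne ha.symm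
    have hene : e ≠ 0 := by rintro rfl; rw [zero_mul] at he; exact hgne he.symm
    obtain ⟨c, d, hcd0, hcde, hc, hd⟩ := exists_pair σ δ i X hsmul b hb hcomm hane hene
    refine ⟨c, d, hcd0, ?_, ?_, ?_⟩
    · rw [← ha, ← he, ← mul_assoc, ← mul_assoc, ← add_mul, hcde, zero_mul]
    · have hde := deg_mul σ δ i X hsmul b hb hcomm hene hhne
      rw [he] at hde
      omega
    · have hda := deg_mul σ δ i X hsmul b hb hcomm hane hhne
      rw [ha] at hda
      omega
  · rintro ⟨c, d, hcd0, hcde, hc, hd⟩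
    have hcne : c ≠ 0 := by
      rintro rfl
      rw [zero_mul, zero_add] at hcde
      have hd0 : d = 0 := by
        by_contra hd0
        exact mul_ne_zero' σ δ i X hsmul b hb hcomm hd0 hgne hcde
      exact hcd0 ⟨rfl, hd0⟩
    have hdne : d ≠ 0 := by
      rintro rfl
      rw [zero_mul, add_zero] at hcde
      have hc0 : c = 0 := by
        by_contra hc0
        exact mul_ne_zero' σ δ i X hsmul b hb hcomm hc0 hfne hcde
      exact hcd0 ⟨hc0, rfl⟩
    set J : Submodule R R := Submodule.span R ({f, g} : Set R) with hJdef
    have hfJ : f ∈ J := Submodule.subset_span (by simp)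
    have hgJ : g ∈ J := Submodule.subset_span (by simp)
    have hex : ∃ k, ∃ p, p ∈ J ∧ p ≠ 0 ∧ deg b p = k := ⟨deg b f, f, hfJ, hfne, rfl⟩
    obtain ⟨h, hhJ, hhne, hhdeg⟩ := Nat.find_spec hex
    have hmin : ∀ p, p ∈ J → p ≠ 0 → Nat.find hex ≤ deg b p :=
      fun p hpJ hp0 => Nat.find_min' hex ⟨p, hpJ, hp0, rfl⟩
    have hdiv : ∀ p, p ∈ J → p ∈ Ideal.span ({h} : Set R) := by
      intro p hpJ
      obtain ⟨q, r, hqr, hr⟩ := div_algo σ δ i X hsmul b hb hcomm h hhne p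
      have hrJ : r ∈ J := by
        have hre : r = p - q * h := by rw [hqr]; abel
        rw [hre]
        exact Submodule.sub_mem _ hpJ
          (by simpa [smul_eq_mul] using Submodule.smul_mem J q hhJ)
      by_cases hr0 : r = 0
      · rw [hr0, add_zero] at hqr
        exact Submodule.mem_span_singleton.mpr ⟨q, by rw [smul_eq_mul, ← hqr]⟩
      · exfalso
        rcases hr with h0 | hlt
        · exact hr0 h0
        · have := hmin r hrJ hr0
          omega
    refine ⟨h, ?_, hdiv f hfJ, hdiv g hgJ⟩
    -- it remains to show 0 < deg b h
    by_contra hh0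
    push_neg at hh0
    have hdeg0 : deg b h = 0 := Nat.le_zero.mp hh0
    -- h is a unit, so J = ⊤
    have hsupp : (b.repr h).support = {0} := by
      apply Finset.Subset.antisymm
      · intro j hj
        have hjle : j ≤ deg b h := Finset.le_sup (f := id) hj
        rw [Finset.mem_singleton]
        omega
      · rw [Finset.singleton_subset_iff]
        have := lead_ne_zero (b := b) hhne
        rw [hdeg0] at this
        exact Finsupp.mem_support_iff.mpr this
    have hrep : h = co b h 0 • (1 : R) := by
      have hr := repr_sum b X hb h
      rw [hsupp, Finset.sum_singleton, pow_zero] at hr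
      exact hr
    have hu : co b h 0 ≠ 0 := by
      have := lead_ne_zero (b := b) hhne
      rwa [hdeg0] at this
    have h1J : (1 : R) ∈ J := by
      have hone : (i (co b h 0)⁻¹) * h = 1 := by
        rw [← hsmul]
        have hstep : (co b h 0)⁻¹ • h = (co b h 0)⁻¹ • (co b h 0 • (1 : R)) := by
          rw [← hrep]
        rw [hstep, smul_smul, inv_mul_cancel₀ hu, one_smul]
      rw [← hone]
      simpa [smul_eq_mul] using Submodule.smul_mem J (i (co b h 0)⁻¹) hhJ
    have hall : ∀ p : R, p ∈ J := by
      intro p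
      have := Submodule.smul_mem J p h1J
      rwa [smul_eq_mul, mul_one] at this
    -- the pairing map
    set Φ : (Vsp b (deg b g) × Vsp b (deg b f)) →ₗ[F] Vsp b (deg b f + deg b g) :=
      LinearMap.codRestrict _
        (((mulRightL i hsmul f).comp (Vsp b (deg b g)).subtype).coprod
          ((mulRightL i hsmul g).comp (Vsp b (deg b f)).subtype))
        (fun x => pair_lands σ δ i X hsmul b hb hcomm hfne hgne
          (by omega) (by omega) x) with hΦ
    have hΦval : ∀ x : Vsp b (deg b g) × Vsp b (deg b f),
        (Φ x : R) = (x.1 : R) * f + (x.2 : R) * g := by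
      intro x
      simp only [hΦ, LinearMap.codRestrict_apply, LinearMap.coprod_apply,
        LinearMap.comp_apply, Submodule.subtype_apply, mulRightL,
        LinearMap.coe_mk, AddHom.coe_mk]
    -- Φ is surjective
    have hsurj : Function.Surjective Φ := by
      intro y
      obtain ⟨u₀, v₀, huv⟩ := Submodule.mem_span_pair.mp (hJdef ▸ hall (y : R))
      rw [smul_eq_mul, smul_eq_mul] at huv
      obtain ⟨q, r, hqr, hr⟩ := div_algo σ δ i X hsmul b hb hcomm c hcne u₀
      set d' := v₀ - q * d with hd'
      have hid : r * f + d' * g = (u₀ * f + v₀ * g) - q * (c * f + d * g) := by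
        rw [hqr, hd']
        noncomm_ring
      rw [hcde, mul_zero, sub_zero, huv] at hid
      have hrV : r ∈ Vsp b (deg b g) := by
        rcases hr with rfl | hlt
        · exact (mem_Vsp_iff b).mpr (Or.inl rfl)
        · exact (mem_Vsp_iff b).mpr (Or.inr (hlt.trans hc))
      have hyco : ∀ s, deg b f + deg b g ≤ s → co b (y : R) s = 0 := by
        intro s hs
        rcases (mem_Vsp_iff b).mp y.2 with h0 | hdy
        · rw [h0, co_zero]
        · exact co_eq_zero_of_deg_lt (by omega)
      have hrfco : ∀ s, deg b f + deg b g ≤ s → co b (r * f) s = 0 := by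
        intro s hs
        by_cases hr0 : r = 0
        · rw [hr0, zero_mul, co_zero]
        · refine co_eq_zero_of_deg_lt ?_
          rw [deg_mul σ δ i X hsmul b hb hcomm hr0 hfne]
          rcases hr with h0 | hlt
          · exact absurd h0 hr0
          · omega
      have hd'V : d' ∈ Vsp b (deg b f) := by
        by_cases hd'0 : d' = 0
        · exact (mem_Vsp_iff b).mpr (Or.inl hd'0)
        · refine (mem_Vsp_iff b).mpr (Or.inr ?_)
          have hd'g : d' * g = (y : R) - r * f := by rw [← hid]; abel
          have hd'gne : d' * g ≠ 0 := mul_ne_zero' σ δ i X hsmul b hb hcomm hd'0 hgne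
          have hdlt : deg b (d' * g) < deg b f + deg b g := by
            refine deg_lt_of_co hd'gne fun s hs => ?_
            rw [hd'g, co_sub, hyco s hs, hrfco s hs, sub_self]
          rw [deg_mul σ δ i X hsmul b hb hcomm hd'0 hgne] at hdlt
          omega
      refine ⟨(⟨r, hrV⟩, ⟨d', hd'V⟩), ?_⟩
      apply Subtype.ext
      rw [hΦval]
      exact hid
    -- Φ is injective, since the finranks agree
    have hfr : Module.finrank F (Vsp b (deg b g) × Vsp b (deg b f)) =
        Module.finrank F (Vsp b (deg b f + deg b g)) := by
      rw [Module.finrank_prod, finrank_Vsp, finrank_Vsp, finrank_Vsp]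
      omega
    have hinj : Function.Injective Φ :=
      (LinearMap.injective_iff_surjective_of_finrank_eq_finrank hfr).mpr hsurj
    -- kernel element gives a contradiction
    have hcV : c ∈ Vsp b (deg b g) := (mem_Vsp_iff b).mpr (Or.inr hc)
    have hdV : d ∈ Vsp b (deg b f) := (mem_Vsp_iff b).mpr (Or.inr hd)
    have hker : Φ (⟨c, hcV⟩, ⟨d, hdV⟩) = 0 := by
      apply Subtype.ext
      rw [hΦval]
      exact hcde
    have hzero : ((⟨c, hcV⟩, ⟨d, hdV⟩) : Vsp b (deg b g) × Vsp b (deg b f)) = 0 := by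
      apply hinj
      rw [hker, map_zero]
    have hc0 : c = 0 := congrArg (fun z => ((Prod.fst z : Vsp b (deg b g)) : R)) hzero
    have hd0 : d = 0 := congrArg (fun z => ((Prod.snd z : Vsp b (deg b f)) : R)) hzero
    exact hcd0 ⟨hc0, hd0⟩
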